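/- Let d ≥ 5 be odd, G = Z_2^d with standard basis e_1,...,e_d, and let C = C_1 ∪ C_2 ∪ C_3 ∪ C_4 where C_1 = {e_1,...,e_d}, C_2 = {e_1+e_2, e_1+e_3, e_2+e_3}, C_3 = {e_i+e_j : 4 ≤ i < j ≤ d}, C_4 = {e_1+e_2+e_3+e_i : 4 ≤ i ≤ d}. Then in the cubelike graph X(G, C), the four vertices 0, e_1+e_2+e_3, e_1+⋯+e_d, and e_4+⋯+e_d are pairwise strongly cospectral; in particular the maximal strongly cospectral subgroup has order at least 4. -/

import Mathlib

open Matrix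

/-- `E` is the orthogonal projection onto the eigenspace of `A` for the eigenvalue `μ`. -/
def IsEigenProjection {V : Type*} [Fintype V] (A : Matrix V V ℝ) (μ : ℝ)
    (E : Matrix V V ℝ) : Prop :=
  E * E = E ∧ E.IsSymm ∧
    (∀ x : V → ℝ, A.mulVec (E.mulVec x) = μ • E.mulVec x) ∧
    (∀ y : V → ℝ, A.mulVec y = μ • y → E.mulVec y = y)

/-- Vertices `u` and `v` are strongly cospectral: `E e_u = ± E e_v` for every spectral
idempotent `E` of `A`. -/
def StronglyCospectral {V : Type*} [Fintype V] [DecidableEq V]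
    (A : Matrix V V ℝ) (u v : V) : Prop :=
  ∀ (μ : ℝ) (E : Matrix V V ℝ), IsEigenProjection A μ E →
    E.mulVec (Pi.single u 1) = E.mulVec (Pi.single v 1) ∨
    E.mulVec (Pi.single u 1) = -E.mulVec (Pi.single v 1)

/-- The adjacency matrix of the Cayley graph `X(G, C)` of an additive group:
`g ~ h` iff `h - g ∈ C`. -/
def addCayleyAdj {G : Type*} [AddGroup G] [Fintype G] [DecidableEq G] (C : Finset G) :
    Matrix G G ℝ :=
  Matrix.of fun g h => if h - g ∈ C then 1 else 0

variable {d : ℕ}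


/-- integer-valued character of `(ZMod 2)^d` -/
def chiZ (a x : Fin d → ZMod 2) : ℤ := if (∑ i, a i * x i) = 0 then 1 else -1

lemma chiZ_cases (a x : Fin d → ZMod 2) : chiZ a x = 1 ∨ chiZ a x = -1 := by
  unfold chiZ; split <;> simp

lemma chiZ_add (a x y : Fin d → ZMod 2) : chiZ a (x + y) = chiZ a x * chiZ a y := by
  have h : ∑ i, a i * (x + y) i = (∑ i, a i * x i) + (∑ i, a i * y i) := by
    simp [mul_add, Finset.sum_add_distrib]
  have key : ∀ u v : ZMod 2, (if u + v = 0 then (1:ℤ) else -1)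
      = (if u = 0 then (1:ℤ) else -1) * (if v = 0 then (1:ℤ) else -1) := by decide
  unfold chiZ
  rw [h, key]

lemma chiZ_zero_right (a : Fin d → ZMod 2) : chiZ a 0 = 1 := by
  simp [chiZ]

lemma chiZ_comm (a x : Fin d → ZMod 2) : chiZ a x = chiZ x a := by
  unfold chiZ
  congr 1
  simp [mul_comm]

lemma chiZ_single (a : Fin d → ZMod 2) (i : Fin d) :
    chiZ a (Pi.single i 1) = if a i = 0 then 1 else -1 := by
  unfold chiZ
  congr 1
  have : ∀ j, a j * (Pi.single i 1 : Fin d → ZMod 2) j = if j = i then a j else 0 := by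
    intro j
    by_cases h : j = i <;> simp [Pi.single_apply, h]
  simp only [this]
  simp

lemma chiZ_mul_self (a x : Fin d → ZMod 2) : chiZ a x * chiZ a x = 1 := by
  rcases chiZ_cases a x with h | h <;> rw [h] <;> norm_num

lemma sum_chiZ (a : Fin d → ZMod 2) :
    ∑ x, chiZ a x = if a = 0 then ((2^d : ℕ) : ℤ) else 0 := by
  split
  · next h =>
    subst h
    have : ∀ x : Fin d → ZMod 2, chiZ 0 x = 1 := by
      intro x; rw [chiZ_comm]; exact chiZ_zero_right x
    simp [this, Finset.card_univ]
  · next h =>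
    obtain ⟨i, hi⟩ : ∃ i, a i ≠ 0 := by
      by_contra hc
      push_neg at hc
      exact h (funext hc)
    have hneg : chiZ a (Pi.single i 1) = -1 := by rw [chiZ_single]; simp [hi]
    have hre : ∑ x, chiZ a x = ∑ x, chiZ a (x + Pi.single i 1) :=
      (Fintype.sum_equiv (Equiv.addRight (Pi.single i 1)) _ _ (fun x => rfl)).symm
    have : ∑ x, chiZ a x = -∑ x, chiZ a x := by
      nth_rewrite 1 [hre]
      simp [chiZ_add, hneg]
    omega

lemma sum_chiZ' (w : Fin d → ZMod 2) :
    ∑ a, chiZ a w = if w = 0 then ((2^d : ℕ) : ℤ) else 0 := by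
  rw [← sum_chiZ w]
  exact Finset.sum_congr rfl fun a _ => chiZ_comm a w

lemma addself (x : Fin d → ZMod 2) : x + x = 0 := by
  funext i
  have : ∀ u : ZMod 2, u + u = 0 := by decide
  exact this (x i)

lemma subeq (x y : Fin d → ZMod 2) : x - y = x + y := by
  rw [sub_eq_add_neg, neg_eq_of_add_eq_zero_right (addself y)]

def lamZ (C : Finset (Fin d → ZMod 2)) (a : Fin d → ZMod 2) : ℤ := ∑ c ∈ C, chiZ a c

lemma mulVec_chi (C : Finset (Fin d → ZMod 2)) (a : Fin d → ZMod 2) :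
    (addCayleyAdj C).mulVec (fun x => ((chiZ a x : ℤ) : ℝ))
      = ((lamZ C a : ℤ) : ℝ) • (fun x => ((chiZ a x : ℤ) : ℝ)) := by
  funext x
  show (∑ y, (if y - x ∈ C then (1:ℝ) else 0) * ((chiZ a y : ℤ) : ℝ)) = _
  have hre := Fintype.sum_equiv (Equiv.addLeft x)
    (fun z => (if (x + z) - x ∈ C then (1:ℝ) else 0) * ((chiZ a (x + z) : ℤ) : ℝ))
    (fun y => (if y - x ∈ C then (1:ℝ) else 0) * ((chiZ a y : ℤ) : ℝ)) (fun z => rfl)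
  rw [← hre]
  have hx : ∀ z : Fin d → ZMod 2, (x + z) - x = z := by
    intro z; rw [subeq]; rw [add_comm x z, add_assoc, addself, add_zero]
  simp only [hx, chiZ_add, ite_mul, one_mul, zero_mul]
  rw [Finset.sum_ite_mem, Finset.univ_inter]
  simp only [Pi.smul_apply, smul_eq_mul, lamZ]
  push_cast
  rw [Finset.sum_mul]
  exact Finset.sum_congr rfl fun c _ => mul_comm _ _

lemma adj_symm (C : Finset (Fin d → ZMod 2)) (x y : Fin d → ZMod 2) :
    addCayleyAdj C x y = addCayleyAdj C y x := by
  unfold addCayleyAdj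
  simp only [Matrix.of_apply]
  rw [subeq, subeq, add_comm]

lemma coeff_vanish (C : Finset (Fin d → ZMod 2)) (μ : ℝ) (y : (Fin d → ZMod 2) → ℝ)
    (hy : (addCayleyAdj C).mulVec y = μ • y) (a : Fin d → ZMod 2)
    (ha : ((lamZ C a : ℤ) : ℝ) ≠ μ) : ∑ z, ((chiZ a z : ℤ) : ℝ) * y z = 0 := by
  have h1 : ∑ z, ((chiZ a z : ℤ) : ℝ) * ((addCayleyAdj C).mulVec y) z
      = μ * ∑ z, ((chiZ a z : ℤ) : ℝ) * y z := by
    rw [hy]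
    simp only [Pi.smul_apply, smul_eq_mul]
    rw [Finset.mul_sum]
    apply Finset.sum_congr rfl
    intro z _; ring
  have h2 : ∑ z, ((chiZ a z : ℤ) : ℝ) * ((addCayleyAdj C).mulVec y) z
      = ((lamZ C a : ℤ) : ℝ) * ∑ z, ((chiZ a z : ℤ) : ℝ) * y z := by
    have expand : ∀ z, ((chiZ a z : ℤ) : ℝ) * ((addCayleyAdj C).mulVec y) z
        = ∑ w, ((chiZ a z : ℤ) : ℝ) * addCayleyAdj C z w * y w := by
      intro z
      show ((chiZ a z : ℤ) : ℝ) * (∑ w, addCayleyAdj C z w * y w) = _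
      rw [Finset.mul_sum]
      exact Finset.sum_congr rfl fun w _ => by ring
    simp only [expand]
    rw [Finset.sum_comm]
    have col : ∀ w, ∑ z, ((chiZ a z : ℤ) : ℝ) * addCayleyAdj C z w
        = ((lamZ C a : ℤ) : ℝ) * ((chiZ a w : ℤ) : ℝ) := by
      intro w
      have := congrFun (mulVec_chi C a) w
      simp only [Matrix.mulVec, dotProduct, Pi.smul_apply, smul_eq_mul] at this
      rw [← this]
      apply Finset.sum_congr rfl
      intro z _
      rw [adj_symm]; ring
    rw [Finset.mul_sum]
    apply Finset.sum_congr rfl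
    intro w _
    rw [← Finset.sum_mul, col]
    ring
  have heq := h1.symm.trans h2
  by_contra hne
  exact ha (mul_right_cancel₀ hne heq).symm

lemma expansion (y : (Fin d → ZMod 2) → ℝ) (x : Fin d → ZMod 2) :
    ((2^d : ℕ) : ℝ) * y x
      = ∑ a, (∑ z, ((chiZ a z : ℤ) : ℝ) * y z) * ((chiZ a x : ℤ) : ℝ) := by
  have step : ∀ a : Fin d → ZMod 2, (∑ z, ((chiZ a z : ℤ) : ℝ) * y z) * ((chiZ a x : ℤ) : ℝ)
      = ∑ z, ((chiZ a (z + x) : ℤ) : ℝ) * y z := by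
    intro a
    rw [Finset.sum_mul]
    apply Finset.sum_congr rfl
    intro z _
    rw [chiZ_add]
    push_cast
    ring
  simp only [step]
  rw [Finset.sum_comm]
  have inner : ∀ z : Fin d → ZMod 2, ∑ a, ((chiZ a (z + x) : ℤ) : ℝ) * y z
      = (if z = x then ((2^d : ℕ) : ℝ) else 0) * y z := by
    intro z
    rw [← Finset.sum_mul]
    congr 1
    have : ∑ a, chiZ a (z + x) = if z + x = 0 then ((2^d : ℕ) : ℤ) else 0 := sum_chiZ' (z + x)
    have hzx : (z + x = 0) ↔ (z = x) := by
      constructor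
      · intro h
        have := congrArg (· + x) h
        simpa [add_assoc, addself, add_zero] using this
      · intro h; rw [h]; exact addself x
    rw [← Int.cast_sum, this]
    split
    · next h => rw [if_pos (hzx.mp h)]; norm_num
    · next h => rw [if_neg (fun hh => h (hzx.mpr hh))]; norm_num
  simp only [inner, ite_mul, zero_mul]
  rw [Finset.sum_ite_eq' Finset.univ x (fun z => ((2^d : ℕ) : ℝ) * y z)]
  simp

lemma scalar_action (C : Finset (Fin d → ZMod 2)) (h : Fin d → ZMod 2) (μ : ℝ)
    (Hh : ∀ a b : Fin d → ZMod 2, lamZ C a = lamZ C b → chiZ a h = chiZ b h) :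
    ∃ c : ℝ, (c = 1 ∨ c = -1) ∧
      ∀ y : (Fin d → ZMod 2) → ℝ, (addCayleyAdj C).mulVec y = μ • y →
        ∀ x, y (x + h) = c * y x := by
  have hpow : ((2^d : ℕ) : ℝ) ≠ 0 := by positivity
  by_cases hex : ∃ a : Fin d → ZMod 2, ((lamZ C a : ℤ) : ℝ) = μ
  · obtain ⟨a0, ha0⟩ := hex
    refine ⟨((chiZ a0 h : ℤ) : ℝ), ?_, ?_⟩
    · rcases chiZ_cases a0 h with hc | hc <;> rw [hc] <;> norm_num
    · intro y hy x
      apply mul_left_cancel₀ hpow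
      rw [expansion y (x + h)]
      have term : ∀ a : Fin d → ZMod 2,
          (∑ z, ((chiZ a z : ℤ) : ℝ) * y z) * ((chiZ a (x + h) : ℤ) : ℝ)
          = ((chiZ a0 h : ℤ) : ℝ) * ((∑ z, ((chiZ a z : ℤ) : ℝ) * y z) * ((chiZ a x : ℤ) : ℝ)) := by
        intro a
        by_cases hva : ((lamZ C a : ℤ) : ℝ) = μ
        · have : lamZ C a = lamZ C a0 := by
            have : ((lamZ C a : ℤ) : ℝ) = ((lamZ C a0 : ℤ) : ℝ) := by rw [ha0, hva]
            exact_mod_cast this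
          have hch : chiZ a h = chiZ a0 h := Hh a a0 this
          rw [chiZ_add, ← hch]
          push_cast
          ring
        · rw [coeff_vanish C μ y hy a hva]
          ring
      simp only [term]
      rw [← Finset.mul_sum, ← expansion y x]
      ring
  · refine ⟨1, Or.inl rfl, ?_⟩
    intro y hy x
    push_neg at hex
    have hz : ∀ w, y w = 0 := by
      intro w
      have := expansion y w
      have hall : ∀ a : Fin d → ZMod 2, (∑ z, ((chiZ a z : ℤ) : ℝ) * y z) * ((chiZ a w : ℤ) : ℝ) = 0 := by
        intro a
        rw [coeff_vanish C μ y hy a (hex a)]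
        ring
      rw [Finset.sum_congr rfl (fun a _ => hall a)] at this
      simp only [Finset.sum_const_zero] at this
      exact (mul_eq_zero.mp this).resolve_left (by positivity)
    rw [hz, hz]
    ring

lemma master (C : Finset (Fin d → ZMod 2)) (u v h : Fin d → ZMod 2) (hvh : v + h = u)
    (Hh : ∀ a b : Fin d → ZMod 2, lamZ C a = lamZ C b → chiZ a h = chiZ b h) :
    StronglyCospectral (addCayleyAdj C) u v := by
  intro μ E hE
  obtain ⟨_, hsymm, heig, _⟩ := hE
  obtain ⟨c, hc, hact⟩ := scalar_action C h μ Hh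
  have colval : ∀ (j i : Fin d → ZMod 2), E.mulVec (Pi.single j 1) i = E i j := by
    intro j i
    show (∑ k, E i k * (Pi.single j 1 : (Fin d → ZMod 2) → ℝ) k) = E i j
    rw [Finset.sum_eq_single j]
    · simp
    · intro b _ hb; simp [Pi.single_apply, hb]
    · intro hmem; exact absurd (Finset.mem_univ j) hmem
  have key : ∀ i : Fin d → ZMod 2, E i u = c * E i v := by
    intro i
    have hcol : (addCayleyAdj C).mulVec (E.mulVec (Pi.single i 1)) = μ • E.mulVec (Pi.single i 1) :=
      heig (Pi.single i 1)
    have := hact (E.mulVec (Pi.single i 1)) hcol v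
    rw [hvh] at this
    rw [colval i u, colval i v] at this
    have hs1 : E u i = E i u := hsymm.apply i u
    have hs2 : E v i = E i v := hsymm.apply i v
    rw [hs1, hs2] at this
    exact this
  rcases hc with hc | hc
  · left
    funext i
    rw [colval u i, colval v i, key i, hc, one_mul]
  · right
    funext i
    rw [colval u i, key i, hc, Pi.neg_apply, colval v i]
    ring

section helpers

variable {ι : Type*} [DecidableEq ι] [LinearOrder ι]

lemma sq_sum_split (s : Finset ι) (f : ι → ℤ) :
    (∑ i ∈ s, f i)^2 = (∑ i ∈ s, (f i)^2)
      + 2 * ∑ p ∈ (s ×ˢ s).filter (fun p => p.1 < p.2), f p.1 * f p.2 := by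
  have expand : (∑ i ∈ s, f i)^2 = ∑ p ∈ s ×ˢ s, f p.1 * f p.2 := by
    rw [Finset.sum_product, sq, Finset.sum_mul_sum]
  rw [expand]
  rw [← Finset.sum_filter_add_sum_filter_not (s ×ˢ s) (fun p => p.1 < p.2)]
  have split2 : ∑ p ∈ (s ×ˢ s).filter (fun p => ¬ p.1 < p.2), f p.1 * f p.2
      = (∑ p ∈ (s ×ˢ s).filter (fun p => p.2 < p.1), f p.1 * f p.2)
        + ∑ i ∈ s, (f i)^2 := by
    rw [← Finset.sum_filter_add_sum_filter_not ((s ×ˢ s).filter (fun p => ¬ p.1 < p.2))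
      (fun p => p.2 < p.1), Finset.filter_filter, Finset.filter_filter]
    congr 1
    · apply Finset.sum_congr _ (fun _ _ => rfl)
      apply Finset.filter_congr
      intro p _
      simp only [not_lt]
      constructor
      · rintro ⟨h1, h2⟩; exact h2
      · intro h; exact ⟨le_of_lt h, h⟩
    · apply Finset.sum_nbij' (i := fun p => p.1) (j := fun i => (i, i))
      · intro p hp
        simp only [Finset.mem_filter, Finset.mem_product] at hp
        exact hp.1.1
      · intro i hi
        simp only [Finset.mem_filter, Finset.mem_product]
        exact ⟨⟨hi, hi⟩, by simp⟩
      · intro p hp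
        simp only [Finset.mem_filter, Finset.mem_product, not_lt] at hp
        have h12 : p.1 = p.2 := le_antisymm hp.2.2 hp.2.1
        exact Prod.ext rfl h12
      · intro i _; rfl
      · intro p hp
        simp only [Finset.mem_filter, Finset.mem_product, not_lt] at hp
        have h12 : p.1 = p.2 := le_antisymm hp.2.2 hp.2.1
        rw [← h12, sq]
  rw [split2]
  have flip : ∑ p ∈ (s ×ˢ s).filter (fun p => p.2 < p.1), f p.1 * f p.2
      = ∑ p ∈ (s ×ˢ s).filter (fun p => p.1 < p.2), f p.1 * f p.2 := by
    apply Finset.sum_nbij' (i := fun p => Prod.swap p) (j := fun p => Prod.swap p)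
    · intro p hp
      simp only [Finset.mem_filter, Finset.mem_product] at hp ⊢
      exact ⟨⟨hp.1.2, hp.1.1⟩, hp.2⟩
    · intro p hp
      simp only [Finset.mem_filter, Finset.mem_product] at hp ⊢
      exact ⟨⟨hp.1.2, hp.1.1⟩, hp.2⟩
    · intro p _; simp
    · intro p _; simp
    · intro p _; exact mul_comm _ _
  rw [flip]
  ring

set_option linter.unusedSectionVars false in
lemma prod_pm_one (s : Finset ι) (f : ι → ℤ) (h : ∀ i ∈ s, f i = 1 ∨ f i = -1) :
    (∏ i ∈ s, f i) = 1 ∨ (∏ i ∈ s, f i) = -1 := by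
  induction s using Finset.cons_induction with
  | empty => left; simp
  | cons a t ha ih =>
    rw [Finset.prod_cons]
    rcases h a (Finset.mem_cons_self a t) with h1 | h1 <;>
      rcases ih (fun i hi => h i (Finset.mem_cons_of_mem hi)) with h2 | h2 <;>
        rw [h1, h2] <;> norm_num

set_option linter.unusedSectionVars false in
lemma sum_prod_mod4 (s : Finset ι) (f : ι → ℤ) (h : ∀ i ∈ s, f i = 1 ∨ f i = -1) :
    ((∑ i ∈ s, f i) + 1 - ∏ i ∈ s, f i) % 4 = (s.card : ℤ) % 4 := by
  induction s using Finset.cons_induction with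
  | empty => simp
  | cons a t ha ih =>
    rw [Finset.prod_cons, Finset.sum_cons, Finset.card_cons]
    have ihh := ih (fun i hi => h i (Finset.mem_cons_of_mem hi))
    have hprod := prod_pm_one t f (fun i hi => h i (Finset.mem_cons_of_mem hi))
    rcases h a (Finset.mem_cons_self a t) with h1 | h1 <;> rw [h1] <;>
      rcases hprod with h2 | h2 <;> rw [h2] at ihh ⊢ <;> push_cast <;> omega

set_option linter.unusedSectionVars false in
lemma sum_parity (s : Finset ι) (f : ι → ℤ) (h : ∀ i ∈ s, f i = 1 ∨ f i = -1) :
    (∑ i ∈ s, f i) % 2 = (s.card : ℤ) % 2 := by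
  have h4 := sum_prod_mod4 s f h
  have hprod := prod_pm_one s f h
  rcases hprod with h2 | h2 <;> rw [h2] at h4 <;> omega

lemma sq_mod4 (x : ℤ) : (x^2 % 4 = 0 ∧ x % 2 = 0) ∨ (x^2 % 4 = 1 ∧ x % 2 = 1) := by
  have hx : x % 2 = 0 ∨ x % 2 = 1 := Int.emod_two_eq x
  have hd : x = 2 * (x / 2) + x % 2 := (Int.mul_ediv_add_emod x 2).symm
  set k := x / 2 with hk
  rcases hx with h | h
  · left
    refine ⟨?_, h⟩
    rw [h, add_zero] at hd
    rw [hd]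
    have : (2*k)^2 = 4 * k^2 := by ring
    rw [this]
    omega
  · right
    refine ⟨?_, h⟩
    rw [h] at hd
    rw [hd]
    have : (2*k+1)^2 = 4 * (k^2 + k) + 1 := by ring
    rw [this]
    omega

end helpers

lemma arith2 (L L' P P' u v : ℤ)
    (hL : (L = 12 ∧ P = 1) ∨ (L = -4 ∧ P = 1) ∨ (L = 0 ∧ P = -1))
    (hL' : (L' = 12 ∧ P' = 1) ∨ (L' = -4 ∧ P' = 1) ∨ (L' = 0 ∧ P' = -1))
    (heq : L + (4*u + 4*u^2 + 4*P*u) = L' + (4*v + 4*v^2 + 4*P'*v)) :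
    P = P' ∧ (2*u) % 4 = (2*v) % 4 := by
  rcases hL with ⟨rfl, rfl⟩ | ⟨rfl, rfl⟩ | ⟨rfl, rfl⟩ <;>
    rcases hL' with ⟨rfl, rfl⟩ | ⟨rfl, rfl⟩ | ⟨rfl, rfl⟩
  · refine ⟨rfl, ?_⟩
    have key : 4*((u+1)^2) = 4*((v+1)^2) := by linear_combination heq
    have q1 := sq_mod4 (u+1)
    have q2 := sq_mod4 (v+1)
    generalize hA : (u+1)^2 = A at key q1
    generalize hB : (v+1)^2 = B at key q2
    omega
  · refine ⟨rfl, ?_⟩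
    have key : 4*((u+1)^2) + 16 = 4*((v+1)^2) := by linear_combination heq
    have q1 := sq_mod4 (u+1)
    have q2 := sq_mod4 (v+1)
    generalize hA : (u+1)^2 = A at key q1
    generalize hB : (v+1)^2 = B at key q2
    omega
  · exfalso
    have key : 4*((u+1)^2) + 8 = 4*(v^2) := by linear_combination heq
    have q1 := sq_mod4 (u+1)
    have q2 := sq_mod4 v
    generalize hA : (u+1)^2 = A at key q1
    generalize hB : v^2 = B at key q2
    omega
  · refine ⟨rfl, ?_⟩
    have key : 4*((u+1)^2) = 4*((v+1)^2) + 16 := by linear_combination heq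
    have q1 := sq_mod4 (u+1)
    have q2 := sq_mod4 (v+1)
    generalize hA : (u+1)^2 = A at key q1
    generalize hB : (v+1)^2 = B at key q2
    omega
  · refine ⟨rfl, ?_⟩
    have key : 4*((u+1)^2) = 4*((v+1)^2) := by linear_combination heq
    have q1 := sq_mod4 (u+1)
    have q2 := sq_mod4 (v+1)
    generalize hA : (u+1)^2 = A at key q1
    generalize hB : (v+1)^2 = B at key q2
    omega
  · exfalso
    have key : 4*((u+1)^2) = 4*(v^2) + 8 := by linear_combination heq
    have q1 := sq_mod4 (u+1)
    have q2 := sq_mod4 v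
    generalize hA : (u+1)^2 = A at key q1
    generalize hB : v^2 = B at key q2
    omega
  · exfalso
    have key : 4*(u^2) = 4*((v+1)^2) + 8 := by linear_combination heq
    have q1 := sq_mod4 u
    have q2 := sq_mod4 (v+1)
    generalize hA : u^2 = A at key q1
    generalize hB : (v+1)^2 = B at key q2
    omega
  · exfalso
    have key : 4*(u^2) + 8 = 4*((v+1)^2) := by linear_combination heq
    have q1 := sq_mod4 u
    have q2 := sq_mod4 (v+1)
    generalize hA : u^2 = A at key q1
    generalize hB : (v+1)^2 = B at key q2
    omega
  · refine ⟨rfl, ?_⟩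
    have key : 4*(u^2) = 4*(v^2) := by linear_combination heq
    have q1 := sq_mod4 u
    have q2 := sq_mod4 v
    generalize hA : u^2 = A at key q1
    generalize hB : v^2 = B at key q2
    omega

lemma triple (e0 e1 e2 : ℤ) (h0 : e0 = 1 ∨ e0 = -1) (h1 : e1 = 1 ∨ e1 = -1)
    (h2 : e2 = 1 ∨ e2 = -1) :
    (2*(e0+e1+e2) + (e0+e1+e2)^2 - 3 = 12 ∧ e0*e1*e2 = 1) ∨
    (2*(e0+e1+e2) + (e0+e1+e2)^2 - 3 = -4 ∧ e0*e1*e2 = 1) ∨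
    (2*(e0+e1+e2) + (e0+e1+e2)^2 - 3 = 0 ∧ e0*e1*e2 = -1) := by
  rcases h0 with rfl | rfl <;> rcases h1 with rfl | rfl <;> rcases h2 with rfl | rfl <;> norm_num

lemma arith (S S' n e0 e1 e2 f0 f1 f2 : ℤ)
    (h0 : e0 = 1 ∨ e0 = -1) (h1 : e1 = 1 ∨ e1 = -1) (h2 : e2 = 1 ∨ e2 = -1)
    (g0 : f0 = 1 ∨ f0 = -1) (g1 : f1 = 1 ∨ f1 = -1) (g2 : f2 = 1 ∨ f2 = -1)
    (hS : S % 2 = 0) (hS' : S' % 2 = 0)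
    (heq : (2*(e0+e1+e2) + (e0+e1+e2)^2 - 3) + (2*S + (S^2 - n) + 2*(e0*e1*e2)*S)
         = (2*(f0+f1+f2) + (f0+f1+f2)^2 - 3) + (2*S' + (S'^2 - n) + 2*(f0*f1*f2)*S')) :
    e0*e1*e2 = f0*f1*f2 ∧ S % 4 = S' % 4 := by
  obtain ⟨u, hu⟩ : ∃ u, S = 2*u := ⟨S / 2, by omega⟩
  obtain ⟨v, hv⟩ : ∃ v, S' = 2*v := ⟨S' / 2, by omega⟩
  subst hu hv
  have tr1 := triple e0 e1 e2 h0 h1 h2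
  have tr2 := triple f0 f1 f2 g0 g1 g2
  have key := arith2 (2*(e0+e1+e2) + (e0+e1+e2)^2 - 3) (2*(f0+f1+f2) + (f0+f1+f2)^2 - 3)
    (e0*e1*e2) (f0*f1*f2) u v tr1 tr2 (by linear_combination heq)
  exact key

lemma e_inj {i j : Fin d} (h : (Pi.single i 1 : Fin d → ZMod 2) = Pi.single j 1) : i = j := by
  by_contra hne
  have := congrFun h i
  simp [Pi.single_apply, hne] at this

lemma chiZ_sum_eq_prod {ι : Type*} (a : Fin d → ZMod 2) (t : Finset ι)
    (v : ι → (Fin d → ZMod 2)) :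
    chiZ a (∑ i ∈ t, v i) = ∏ i ∈ t, chiZ a (v i) := by
  induction t using Finset.cons_induction with
  | empty => simp [chiZ_zero_right]
  | cons x t hx ih => rw [Finset.sum_cons, Finset.prod_cons, chiZ_add, ih]

lemma ne_of_eval {x y : Fin d → ZMod 2} (j : Fin d) (hx : x j = 0) (hy : y j = 1) : x ≠ y := by
  intro h
  rw [h, hy] at hx
  exact one_ne_zero hx

lemma weight_single (i : Fin d) : ∑ j, (Pi.single i 1 : Fin d → ZMod 2) j = 1 := by
  simp [Pi.single_apply]

lemma weight_double (a b : Fin d) (hab : a ≠ b) :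
    ∑ j, (Pi.single a 1 + Pi.single b 1 : Fin d → ZMod 2) j = 0 := by
  simp only [Pi.add_apply, Finset.sum_add_distrib, weight_single]
  decide

lemma weight_quad (a b c f : Fin d) :
    ∑ j, (Pi.single a 1 + Pi.single b 1 + Pi.single c 1 + Pi.single f 1 : Fin d → ZMod 2) j
      = 0 := by
  simp only [Pi.add_apply, Finset.sum_add_distrib, weight_single]
  decide

lemma low_filter_eq {d : ℕ} (i1 i2 i3 : Fin d)
    (h1 : i1.val = 0) (h2 : i2.val = 1) (h3 : i3.val = 2) :
    Finset.univ.filter (fun j : Fin d => ¬ 3 ≤ j.val) = {i1, i2, i3} := by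
  ext j
  simp only [Finset.mem_filter, Finset.mem_univ, true_and, Finset.mem_insert,
    Finset.mem_singleton, Fin.ext_iff, h1, h2, h3]
  omega

lemma scard {d : ℕ} (hd : 5 ≤ d) (i1 i2 i3 : Fin d)
    (h1 : i1.val = 0) (h2 : i2.val = 1) (h3 : i3.val = 2) :
    ((Finset.univ.filter (fun j : Fin d => 3 ≤ j.val)).card : ℤ) = (d : ℤ) - 3 := by
  have hsplit := Finset.card_filter_add_card_filter_not
    (s := (Finset.univ : Finset (Fin d))) (p := fun j : Fin d => 3 ≤ j.val)
  rw [low_filter_eq i1 i2 i3 h1 h2 h3] at hsplit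
  have hne12 : i1 ≠ i2 := Fin.ne_of_val_ne (by omega)
  have hne13 : i1 ≠ i3 := Fin.ne_of_val_ne (by omega)
  have hne23 : i2 ≠ i3 := Fin.ne_of_val_ne (by omega)
  have hcard3 : ({i1, i2, i3} : Finset (Fin d)).card = 3 := by
    rw [Finset.card_insert_of_notMem (by simp [hne12, hne13]),
      Finset.card_insert_of_notMem (by simp [hne23]), Finset.card_singleton]
  rw [hcard3, Finset.card_univ, Fintype.card_fin] at hsplit
  omega

lemma lam_formula {d : ℕ} (hd : 5 ≤ d) (i1 i2 i3 : Fin d)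
    (h1 : i1.val = 0) (h2 : i2.val = 1) (h3 : i3.val = 2) (a : Fin d → ZMod 2) :
    2 * lamZ ((Finset.univ.image (fun i : Fin d => (Pi.single i 1 : Fin d → ZMod 2)))
        ∪ {Pi.single i1 1 + Pi.single i2 1, Pi.single i1 1 + Pi.single i3 1,
           Pi.single i2 1 + Pi.single i3 1}
        ∪ ((Finset.univ : Finset (Fin d × Fin d)).filter
            (fun p => 3 ≤ p.1.val ∧ p.1.val < p.2.val)).image
            (fun p => (Pi.single p.1 1 : Fin d → ZMod 2) + Pi.single p.2 1)
        ∪ ((Finset.univ : Finset (Fin d)).filter (fun i => 3 ≤ i.val)).image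
            (fun i => (Pi.single i1 1 : Fin d → ZMod 2) + Pi.single i2 1 + Pi.single i3 1
              + Pi.single i 1)) a
      = (2*(chiZ a (Pi.single i1 1) + chiZ a (Pi.single i2 1) + chiZ a (Pi.single i3 1))
          + (chiZ a (Pi.single i1 1) + chiZ a (Pi.single i2 1) + chiZ a (Pi.single i3 1))^2 - 3)
        + (2*(∑ i ∈ Finset.univ.filter (fun i : Fin d => 3 ≤ i.val), chiZ a (Pi.single i 1))
           + ((∑ i ∈ Finset.univ.filter (fun i : Fin d => 3 ≤ i.val), chiZ a (Pi.single i 1))^2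
              - ((d : ℤ) - 3))
           + 2*(chiZ a (Pi.single i1 1) * chiZ a (Pi.single i2 1) * chiZ a (Pi.single i3 1))
             * (∑ i ∈ Finset.univ.filter (fun i : Fin d => 3 ≤ i.val), chiZ a (Pi.single i 1))) := by
  have hne12 : i1 ≠ i2 := Fin.ne_of_val_ne (by omega)
  have hne13 : i1 ≠ i3 := Fin.ne_of_val_ne (by omega)
  have hne23 : i2 ≠ i3 := Fin.ne_of_val_ne (by omega)
  set C1 : Finset (Fin d → ZMod 2) :=
    Finset.univ.image (fun i : Fin d => (Pi.single i 1 : Fin d → ZMod 2)) with hC1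
  set C2 : Finset (Fin d → ZMod 2) :=
    ({Pi.single i1 1 + Pi.single i2 1, Pi.single i1 1 + Pi.single i3 1,
      Pi.single i2 1 + Pi.single i3 1} : Finset (Fin d → ZMod 2)) with hC2
  set C3 : Finset (Fin d → ZMod 2) :=
    ((Finset.univ : Finset (Fin d × Fin d)).filter
      (fun p => 3 ≤ p.1.val ∧ p.1.val < p.2.val)).image
      (fun p => (Pi.single p.1 1 : Fin d → ZMod 2) + Pi.single p.2 1) with hC3
  set C4 : Finset (Fin d → ZMod 2) :=
    ((Finset.univ : Finset (Fin d)).filter (fun i => 3 ≤ i.val)).image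
      (fun i => (Pi.single i1 1 : Fin d → ZMod 2) + Pi.single i2 1 + Pi.single i3 1
        + Pi.single i 1) with hC4
  -- weights
  have w1 : ∀ x ∈ C1, ∑ j, x j = 1 := by
    intro x hx
    rw [hC1, Finset.mem_image] at hx
    obtain ⟨i, _, rfl⟩ := hx
    exact weight_single i
  have w2 : ∀ x ∈ C2, ∑ j, x j = 0 := by
    intro x hx
    rw [hC2] at hx
    simp only [Finset.mem_insert, Finset.mem_singleton] at hx
    rcases hx with rfl | rfl | rfl
    · exact weight_double i1 i2 hne12
    · exact weight_double i1 i3 hne13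
    · exact weight_double i2 i3 hne23
  have w3 : ∀ x ∈ C3, ∑ j, x j = 0 := by
    intro x hx
    rw [hC3, Finset.mem_image] at hx
    obtain ⟨p, hp, rfl⟩ := hx
    simp only [Finset.mem_filter] at hp
    exact weight_double p.1 p.2 (Fin.ne_of_val_ne (by omega))
  have w4 : ∀ x ∈ C4, ∑ j, x j = 0 := by
    intro x hx
    rw [hC4, Finset.mem_image] at hx
    obtain ⟨i, _, rfl⟩ := hx
    exact weight_quad i1 i2 i3 i
  have d12 : Disjoint C1 C2 := Finset.disjoint_left.mpr (by
    intro x hx1 hx2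
    have := (w1 x hx1).symm.trans (w2 x hx2)
    exact one_ne_zero this)
  have d13 : Disjoint C1 C3 := Finset.disjoint_left.mpr (by
    intro x hx1 hx2
    exact one_ne_zero ((w1 x hx1).symm.trans (w3 x hx2)))
  have d14 : Disjoint C1 C4 := Finset.disjoint_left.mpr (by
    intro x hx1 hx2
    exact one_ne_zero ((w1 x hx1).symm.trans (w4 x hx2)))
  have d23 : Disjoint C2 C3 := Finset.disjoint_left.mpr (by
    intro x hx2 hx3
    rw [hC2] at hx2
    rw [hC3, Finset.mem_image] at hx3
    obtain ⟨p, hp, hpe⟩ := hx3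
    simp only [Finset.mem_filter] at hp
    simp only [Finset.mem_insert, Finset.mem_singleton] at hx2
    have key : ∀ (u v : Fin d), u ≠ p.2 → v ≠ p.2 →
        (Pi.single u 1 + Pi.single v 1 : Fin d → ZMod 2)
          ≠ Pi.single p.1 1 + Pi.single p.2 1 := by
      intro u v hu hv
      apply ne_of_eval p.2
      · simp [Pi.single_apply, hu.symm, hv.symm]
      · simp [Pi.single_apply, (Fin.ne_of_val_ne (show p.2.val ≠ p.1.val by omega))]
    rcases hx2 with rfl | rfl | rfl
    · exact key i1 i2 (Fin.ne_of_val_ne (by omega)) (Fin.ne_of_val_ne (by omega)) hpe.symm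
    · exact key i1 i3 (Fin.ne_of_val_ne (by omega)) (Fin.ne_of_val_ne (by omega)) hpe.symm
    · exact key i2 i3 (Fin.ne_of_val_ne (by omega)) (Fin.ne_of_val_ne (by omega)) hpe.symm)
  have d24 : Disjoint C2 C4 := Finset.disjoint_left.mpr (by
    intro x hx2 hx4
    rw [hC2] at hx2
    rw [hC4, Finset.mem_image] at hx4
    obtain ⟨i, hi, hie⟩ := hx4
    simp only [Finset.mem_filter] at hi
    simp only [Finset.mem_insert, Finset.mem_singleton] at hx2
    have hii1 : i ≠ i1 := Fin.ne_of_val_ne (by omega)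
    have hii2 : i ≠ i2 := Fin.ne_of_val_ne (by omega)
    have hii3 : i ≠ i3 := Fin.ne_of_val_ne (by omega)
    have key : ∀ (u v : Fin d), u ≠ i → v ≠ i →
        (Pi.single u 1 + Pi.single v 1 : Fin d → ZMod 2)
          ≠ Pi.single i1 1 + Pi.single i2 1 + Pi.single i3 1 + Pi.single i 1 := by
      intro u v hu hv
      apply ne_of_eval i
      · simp [Pi.single_apply, hu.symm, hv.symm]
      · simp [Pi.single_apply, hii1.symm, hii2.symm, hii3.symm]
    rcases hx2 with rfl | rfl | rfl
    · exact key i1 i2 hii1.symm hii2.symm hie.symm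
    · exact key i1 i3 hii1.symm hii3.symm hie.symm
    · exact key i2 i3 hii2.symm hii3.symm hie.symm)
  have d34 : Disjoint C3 C4 := Finset.disjoint_left.mpr (by
    intro x hx3 hx4
    rw [hC3, Finset.mem_image] at hx3
    rw [hC4, Finset.mem_image] at hx4
    obtain ⟨p, hp, rfl⟩ := hx3
    obtain ⟨i, hi, hie⟩ := hx4
    simp only [Finset.mem_filter] at hp hi
    have hp1 : i1 ≠ p.1 := Fin.ne_of_val_ne (by omega)
    have hp2 : i1 ≠ p.2 := Fin.ne_of_val_ne (by omega)
    have hi2 : i1 ≠ i := Fin.ne_of_val_ne (by omega)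
    apply ne_of_eval i1 (x := (Pi.single p.1 1 : Fin d → ZMod 2) + Pi.single p.2 1) ?_ ?_ hie.symm
    · simp [Pi.single_apply, hp1, hp2]
    · simp [Pi.single_apply, hne12, hne13, hi2])
  -- sums over the pieces
  have hq12 : i2 ≠ i1 := Fin.ne_of_val_ne (by omega)
  have hq13 : i3 ≠ i1 := Fin.ne_of_val_ne (by omega)
  have hq23 : i3 ≠ i2 := Fin.ne_of_val_ne (by omega)
  have e1 : ∑ x ∈ C1, chiZ a x = ∑ i : Fin d, chiZ a (Pi.single i 1) := by
    rw [hC1]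
    apply Finset.sum_image
    intro x _ y _ h
    exact e_inj h
  have esplit : ∑ i : Fin d, chiZ a (Pi.single i 1)
      = (chiZ a (Pi.single i1 1) + chiZ a (Pi.single i2 1) + chiZ a (Pi.single i3 1))
        + ∑ i ∈ Finset.univ.filter (fun i : Fin d => 3 ≤ i.val), chiZ a (Pi.single i 1) := by
    rw [← Finset.sum_filter_add_sum_filter_not Finset.univ (fun j : Fin d => 3 ≤ j.val)
      (fun i => chiZ a (Pi.single i 1))]
    rw [low_filter_eq i1 i2 i3 h1 h2 h3]
    rw [Finset.sum_insert (by simp [hne12, hne13]), Finset.sum_insert (by simp [hne23]),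
      Finset.sum_singleton]
    ring
  have ne_a : (Pi.single i1 1 + Pi.single i2 1 : Fin d → ZMod 2)
      ≠ Pi.single i1 1 + Pi.single i3 1 :=
    ne_of_eval i3 (by simp [Pi.single_apply, hq13, hq23]) (by simp [Pi.single_apply, hq13])
  have ne_b : (Pi.single i1 1 + Pi.single i2 1 : Fin d → ZMod 2)
      ≠ Pi.single i2 1 + Pi.single i3 1 :=
    ne_of_eval i3 (by simp [Pi.single_apply, hq13, hq23]) (by simp [Pi.single_apply, hq23])
  have ne_c : (Pi.single i1 1 + Pi.single i3 1 : Fin d → ZMod 2)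
      ≠ Pi.single i2 1 + Pi.single i3 1 :=
    ne_of_eval i2 (by simp [Pi.single_apply, hq12, hne23]) (by simp [Pi.single_apply, hne23])
  have e2 : ∑ x ∈ C2, chiZ a x
      = chiZ a (Pi.single i1 1) * chiZ a (Pi.single i2 1)
        + chiZ a (Pi.single i1 1) * chiZ a (Pi.single i3 1)
        + chiZ a (Pi.single i2 1) * chiZ a (Pi.single i3 1) := by
    rw [hC2, Finset.sum_insert (by simp [ne_a, ne_b]), Finset.sum_insert (by simp [ne_c]),
      Finset.sum_singleton, chiZ_add, chiZ_add, chiZ_add]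
    ring
  have e3 : ∑ x ∈ C3, chiZ a x
      = ∑ p ∈ (Finset.univ : Finset (Fin d × Fin d)).filter
          (fun p => 3 ≤ p.1.val ∧ p.1.val < p.2.val),
          chiZ a (Pi.single p.1 1) * chiZ a (Pi.single p.2 1) := by
    rw [hC3]
    rw [Finset.sum_image]
    · exact Finset.sum_congr rfl fun p _ => chiZ_add a _ _
    · intro p hp q hq h
      simp only [Finset.mem_coe, Finset.mem_filter, Finset.mem_univ, true_and] at hp hq
      have hpq : p.1 ≠ p.2 := Fin.ne_of_val_ne (by omega)
      have hqq : q.1 ≠ q.2 := Fin.ne_of_val_ne (by omega)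
      have m1 : q.1 = p.1 ∨ q.1 = p.2 := by
        by_contra hc
        push_neg at hc
        have hv := congrFun h q.1
        simp [Pi.single_apply, hc.1, hc.2, hqq] at hv
      have m2 : q.2 = p.1 ∨ q.2 = p.2 := by
        by_contra hc
        push_neg at hc
        have hv := congrFun h q.2
        simp [Pi.single_apply, hc.1, hc.2, hqq.symm] at hv
      rcases m1 with hm1 | hm1 <;> rcases m2 with hm2 | hm2
      · exfalso
        have := congrArg Fin.val hm1
        have := congrArg Fin.val hm2
        omega
      · exact (Prod.ext hm1 hm2).symm
      · exfalso
        have := congrArg Fin.val hm1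
        have := congrArg Fin.val hm2
        omega
      · exfalso
        have := congrArg Fin.val hm1
        have := congrArg Fin.val hm2
        omega
  have e4 : ∑ x ∈ C4, chiZ a x
      = ∑ i ∈ Finset.univ.filter (fun i : Fin d => 3 ≤ i.val),
          chiZ a (Pi.single i1 1) * chiZ a (Pi.single i2 1) * chiZ a (Pi.single i3 1)
            * chiZ a (Pi.single i 1) := by
    rw [hC4]
    rw [Finset.sum_image]
    · exact Finset.sum_congr rfl fun i _ => by rw [chiZ_add, chiZ_add, chiZ_add]
    · intro i hi q hq h
      simp only [Finset.mem_coe, Finset.mem_filter, Finset.mem_univ, true_and] at hi hq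
      by_contra hne
      have hni1 : i ≠ i1 := Fin.ne_of_val_ne (by omega)
      have hni2 : i ≠ i2 := Fin.ne_of_val_ne (by omega)
      have hni3 : i ≠ i3 := Fin.ne_of_val_ne (by omega)
      have hv := congrFun h i
      simp [Pi.single_apply, hni1, hni2, hni3, hne] at hv
  have hPF : (Finset.univ : Finset (Fin d × Fin d)).filter
        (fun p => 3 ≤ p.1.val ∧ p.1.val < p.2.val)
      = ((Finset.univ.filter (fun i : Fin d => 3 ≤ i.val)) ×ˢ
          (Finset.univ.filter (fun i : Fin d => 3 ≤ i.val))).filter (fun p => p.1 < p.2) := by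
    ext p
    simp only [Finset.mem_filter, Finset.mem_univ, true_and, Finset.mem_product, Fin.lt_def]
    omega
  have hsum_sq : ∑ i ∈ Finset.univ.filter (fun i : Fin d => 3 ≤ i.val),
      (chiZ a (Pi.single i 1))^2 = (d : ℤ) - 3 := by
    rw [Finset.sum_congr rfl (fun i _ => by rw [sq, chiZ_mul_self])]
    rw [Finset.sum_const, nsmul_eq_mul, mul_one]
    exact scard hd i1 i2 i3 h1 h2 h3
  have h2S3 : 2 * ∑ p ∈ (Finset.univ : Finset (Fin d × Fin d)).filter
        (fun p => 3 ≤ p.1.val ∧ p.1.val < p.2.val),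
        chiZ a (Pi.single p.1 1) * chiZ a (Pi.single p.2 1)
      = (∑ i ∈ Finset.univ.filter (fun i : Fin d => 3 ≤ i.val), chiZ a (Pi.single i 1))^2
        - ((d : ℤ) - 3) := by
    rw [hPF]
    rw [sq_sum_split (Finset.univ.filter (fun i : Fin d => 3 ≤ i.val))
      (fun i => chiZ a (Pi.single i 1))]
    rw [hsum_sq]
    ring
  have e4' : ∑ x ∈ C4, chiZ a x
      = chiZ a (Pi.single i1 1) * chiZ a (Pi.single i2 1) * chiZ a (Pi.single i3 1)
        * ∑ i ∈ Finset.univ.filter (fun i : Fin d => 3 ≤ i.val), chiZ a (Pi.single i 1) := by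
    rw [e4, Finset.mul_sum]
  have hsq1 : chiZ a (Pi.single i1 1) * chiZ a (Pi.single i1 1) = 1 := chiZ_mul_self a _
  have hsq2 : chiZ a (Pi.single i2 1) * chiZ a (Pi.single i2 1) = 1 := chiZ_mul_self a _
  have hsq3 : chiZ a (Pi.single i3 1) * chiZ a (Pi.single i3 1) = 1 := chiZ_mul_self a _
  have hdecomp : lamZ (C1 ∪ C2 ∪ C3 ∪ C4) a
      = (∑ x ∈ C1, chiZ a x) + (∑ x ∈ C2, chiZ a x) + (∑ x ∈ C3, chiZ a x)
        + (∑ x ∈ C4, chiZ a x) := by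
    unfold lamZ
    rw [Finset.sum_union (by
        rw [Finset.disjoint_union_left, Finset.disjoint_union_left]
        exact ⟨⟨d14, d24⟩, d34⟩),
      Finset.sum_union (by
        rw [Finset.disjoint_union_left]
        exact ⟨d13, d23⟩),
      Finset.sum_union d12]
  rw [hdecomp, e1, esplit, e2, e3, e4']
  linear_combination h2S3 - hsq1 - hsq2 - hsq3

lemma key_chi {d : ℕ} (hd : 5 ≤ d) (hodd : Odd d) (i1 i2 i3 : Fin d)
    (h1 : i1.val = 0) (h2 : i2.val = 1) (h3 : i3.val = 2) (a b : Fin d → ZMod 2)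
    (hlam : lamZ ((Finset.univ.image (fun i : Fin d => (Pi.single i 1 : Fin d → ZMod 2)))
        ∪ {Pi.single i1 1 + Pi.single i2 1, Pi.single i1 1 + Pi.single i3 1,
           Pi.single i2 1 + Pi.single i3 1}
        ∪ ((Finset.univ : Finset (Fin d × Fin d)).filter
            (fun p => 3 ≤ p.1.val ∧ p.1.val < p.2.val)).image
            (fun p => (Pi.single p.1 1 : Fin d → ZMod 2) + Pi.single p.2 1)
        ∪ ((Finset.univ : Finset (Fin d)).filter (fun i => 3 ≤ i.val)).image
            (fun i => (Pi.single i1 1 : Fin d → ZMod 2) + Pi.single i2 1 + Pi.single i3 1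
              + Pi.single i 1)) a
      = lamZ ((Finset.univ.image (fun i : Fin d => (Pi.single i 1 : Fin d → ZMod 2)))
        ∪ {Pi.single i1 1 + Pi.single i2 1, Pi.single i1 1 + Pi.single i3 1,
           Pi.single i2 1 + Pi.single i3 1}
        ∪ ((Finset.univ : Finset (Fin d × Fin d)).filter
            (fun p => 3 ≤ p.1.val ∧ p.1.val < p.2.val)).image
            (fun p => (Pi.single p.1 1 : Fin d → ZMod 2) + Pi.single p.2 1)
        ∪ ((Finset.univ : Finset (Fin d)).filter (fun i => 3 ≤ i.val)).image
            (fun i => (Pi.single i1 1 : Fin d → ZMod 2) + Pi.single i2 1 + Pi.single i3 1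
              + Pi.single i 1)) b) :
    chiZ a (Pi.single i1 1 + Pi.single i2 1 + Pi.single i3 1)
      = chiZ b (Pi.single i1 1 + Pi.single i2 1 + Pi.single i3 1) ∧
    chiZ a (∑ i, (Pi.single i 1 : Fin d → ZMod 2))
      = chiZ b (∑ i, (Pi.single i 1 : Fin d → ZMod 2)) := by
  have hfa := lam_formula hd i1 i2 i3 h1 h2 h3 a
  have hfb := lam_formula hd i1 i2 i3 h1 h2 h3 b
  have heq := hfa.symm.trans (by rw [hlam, hfb])
  have hcardeq := scard hd i1 i2 i3 h1 h2 h3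
  have hcard2 : ((Finset.univ.filter (fun j : Fin d => 3 ≤ j.val)).card : ℤ) % 2 = 0 := by
    obtain ⟨k, hk⟩ := hodd
    omega
  have hSa : (∑ i ∈ Finset.univ.filter (fun i : Fin d => 3 ≤ i.val),
      chiZ a (Pi.single i 1)) % 2 = 0 := by
    rw [sum_parity _ _ (fun i _ => chiZ_cases a _)]
    exact hcard2
  have hSb : (∑ i ∈ Finset.univ.filter (fun i : Fin d => 3 ≤ i.val),
      chiZ b (Pi.single i 1)) % 2 = 0 := by
    rw [sum_parity _ _ (fun i _ => chiZ_cases b _)]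
    exact hcard2
  obtain ⟨hP, hS4⟩ := arith _ _ ((d : ℤ) - 3) _ _ _ _ _ _
    (chiZ_cases a _) (chiZ_cases a _) (chiZ_cases a _)
    (chiZ_cases b _) (chiZ_cases b _) (chiZ_cases b _) hSa hSb heq
  constructor
  · rw [chiZ_add, chiZ_add, chiZ_add, chiZ_add]
    exact hP
  · rw [chiZ_sum_eq_prod, chiZ_sum_eq_prod]
    have hsplit : ∀ c : Fin d → ZMod 2, ∏ i, chiZ c (Pi.single i 1)
        = (∏ i ∈ Finset.univ.filter (fun i : Fin d => 3 ≤ i.val), chiZ c (Pi.single i 1))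
          * (chiZ c (Pi.single i1 1) * chiZ c (Pi.single i2 1) * chiZ c (Pi.single i3 1)) := by
      intro c
      have hne12 : i1 ≠ i2 := Fin.ne_of_val_ne (by omega)
      have hne13 : i1 ≠ i3 := Fin.ne_of_val_ne (by omega)
      have hne23 : i2 ≠ i3 := Fin.ne_of_val_ne (by omega)
      rw [← Finset.prod_filter_mul_prod_filter_not Finset.univ (fun j : Fin d => 3 ≤ j.val)]
      rw [low_filter_eq i1 i2 i3 h1 h2 h3]
      rw [Finset.prod_insert (by simp [hne12, hne13]), Finset.prod_insert (by simp [hne23]),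
        Finset.prod_singleton]
      ring
    rw [hsplit a, hsplit b]
    have hm4a := sum_prod_mod4 (Finset.univ.filter (fun i : Fin d => 3 ≤ i.val))
      (fun i => chiZ a (Pi.single i 1)) (fun i _ => chiZ_cases a _)
    have hm4b := sum_prod_mod4 (Finset.univ.filter (fun i : Fin d => 3 ≤ i.val))
      (fun i => chiZ b (Pi.single i 1)) (fun i _ => chiZ_cases b _)
    have hQa := prod_pm_one (Finset.univ.filter (fun i : Fin d => 3 ≤ i.val))
      (fun i => chiZ a (Pi.single i 1)) (fun i _ => chiZ_cases a _)
    have hQb := prod_pm_one (Finset.univ.filter (fun i : Fin d => 3 ≤ i.val))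
      (fun i => chiZ b (Pi.single i 1)) (fun i _ => chiZ_cases b _)
    have hQ : (∏ i ∈ Finset.univ.filter (fun i : Fin d => 3 ≤ i.val), chiZ a (Pi.single i 1))
        = ∏ i ∈ Finset.univ.filter (fun i : Fin d => 3 ≤ i.val), chiZ b (Pi.single i 1) := by
      generalize hQA : (∏ i ∈ Finset.univ.filter (fun i : Fin d => 3 ≤ i.val),
        chiZ a (Pi.single i 1)) = QA at hm4a hQa ⊢
      generalize hQB : (∏ i ∈ Finset.univ.filter (fun i : Fin d => 3 ≤ i.val),
        chiZ b (Pi.single i 1)) = QB at hm4b hQb ⊢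
      generalize hSA : (∑ i ∈ Finset.univ.filter (fun i : Fin d => 3 ≤ i.val),
        chiZ a (Pi.single i 1)) = SA at hm4a hS4
      generalize hSB : (∑ i ∈ Finset.univ.filter (fun i : Fin d => 3 ≤ i.val),
        chiZ b (Pi.single i 1)) = SB at hm4b hS4
      generalize hN : ((Finset.univ.filter (fun j : Fin d => 3 ≤ j.val)).card : ℤ) = N at hm4a hm4b
      omega
    rw [hQ, hP]

theorem stmt18 (d : ℕ) (hd : 5 ≤ d) (hodd : Odd d) :
    let e : Fin d → (Fin d → ZMod 2) := fun i => Pi.single i 1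
    let i1 : Fin d := ⟨0, by omega⟩
    let i2 : Fin d := ⟨1, by omega⟩
    let i3 : Fin d := ⟨2, by omega⟩
    let C1 : Finset (Fin d → ZMod 2) := Finset.univ.image e
    let C2 : Finset (Fin d → ZMod 2) := {e i1 + e i2, e i1 + e i3, e i2 + e i3}
    let C3 : Finset (Fin d → ZMod 2) :=
      ((Finset.univ : Finset (Fin d × Fin d)).filter
        (fun p => 3 ≤ p.1.val ∧ p.1.val < p.2.val)).image (fun p => e p.1 + e p.2)
    let C4 : Finset (Fin d → ZMod 2) :=
      ((Finset.univ : Finset (Fin d)).filter (fun i => 3 ≤ i.val)).image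
        (fun i => e i1 + e i2 + e i3 + e i)
    let C := C1 ∪ C2 ∪ C3 ∪ C4
    let g := e i1 + e i2 + e i3
    let σ := ∑ i, e i
    (∀ u ∈ ({0, g, σ, g + σ} : Finset (Fin d → ZMod 2)),
      ∀ v ∈ ({0, g, σ, g + σ} : Finset (Fin d → ZMod 2)),
        StronglyCospectral (addCayleyAdj C) u v) ∧
    ({0, g, σ, g + σ} : Finset (Fin d → ZMod 2)).card = 4 := by
  intro e i1 i2 i3 C1 C2 C3 C4 C g σ
  have h1 : i1.val = 0 := rfl
  have h2 : i2.val = 1 := rfl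
  have h3 : i3.val = 2 := rfl
  have hne12 : i1 ≠ i2 := Fin.ne_of_val_ne (by rw [h1, h2]; decide)
  have hne13 : i1 ≠ i3 := Fin.ne_of_val_ne (by rw [h1, h3]; decide)
  have hne23 : i2 ≠ i3 := Fin.ne_of_val_ne (by rw [h2, h3]; decide)
  set i4 : Fin d := ⟨3, by omega⟩ with hi4
  have h4 : i4.val = 3 := rfl
  have hne14 : i1 ≠ i4 := Fin.ne_of_val_ne (by rw [h1, h4]; decide)
  have hne24 : i2 ≠ i4 := Fin.ne_of_val_ne (by rw [h2, h4]; decide)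
  have hne34 : i3 ≠ i4 := Fin.ne_of_val_ne (by rw [h3, h4]; decide)
  -- evaluations
  have hg1 : g (i1) = 1 := by
    show (e i1 + e i2 + e i3) i1 = 1
    simp [e, Pi.single_apply, hne12.symm, hne13.symm]
  have hg4 : g (i4) = 0 := by
    show (e i1 + e i2 + e i3) i4 = 0
    simp [e, Pi.single_apply, hne14.symm, hne24.symm, hne34.symm]
  have hsig : ∀ j, σ j = 1 := by
    intro j
    show (∑ i, e i) j = 1
    rw [Finset.sum_apply]
    have hterm : ∀ i : Fin d, e i j = if j = i then 1 else 0 := by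
      intro i
      show (Pi.single i 1 : Fin d → ZMod 2) j = _
      exact Pi.single_apply i 1 j
    rw [Finset.sum_congr rfl (fun i _ => hterm i), Finset.sum_ite_eq]
    simp
  have hgs1 : (g + σ) i1 = 0 := by
    rw [Pi.add_apply, hg1, hsig]
    decide
  have hgs4 : (g + σ) i4 = 1 := by
    rw [Pi.add_apply, hg4, hsig]
    decide
  have hzg : (0 : Fin d → ZMod 2) ≠ g := ne_of_eval i1 rfl hg1
  have hzs : (0 : Fin d → ZMod 2) ≠ σ := ne_of_eval i1 rfl (hsig i1)
  have hzgs : (0 : Fin d → ZMod 2) ≠ g + σ := ne_of_eval i4 rfl hgs4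
  have hgsig : g ≠ σ := ne_of_eval i4 hg4 (hsig i4)
  have hggs : g ≠ g + σ := ne_of_eval i4 hg4 hgs4
  have hsgs : σ ≠ g + σ := (ne_of_eval i1 hgs1 (hsig i1)).symm
  -- character condition on H
  have HH : ∀ h₀ ∈ ({0, g, σ, g + σ} : Finset (Fin d → ZMod 2)),
      ∀ a b : Fin d → ZMod 2, lamZ C a = lamZ C b → chiZ a h₀ = chiZ b h₀ := by
    intro h₀ hh a b hlam
    have hk := key_chi hd hodd i1 i2 i3 h1 h2 h3 a b hlam
    simp only [Finset.mem_insert, Finset.mem_singleton] at hh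
    rcases hh with rfl | rfl | rfl | rfl
    · rw [chiZ_zero_right, chiZ_zero_right]
    · exact hk.1
    · exact hk.2
    · rw [chiZ_add a g σ, chiZ_add b g σ,
        (hk.1 : chiZ a g = chiZ b g), (hk.2 : chiZ a σ = chiZ b σ)]
  clear_value g σ
  -- closure of H under addition
  have tA : σ + g = g + σ := add_comm σ g
  have tB : g + (g + σ) = σ := by rw [← add_assoc, addself, zero_add]
  have tC : σ + (g + σ) = g := by rw [add_comm g σ, ← add_assoc, addself, zero_add]
  have tD : (g + σ) + g = σ := by rw [add_comm, tB]
  have tE : (g + σ) + σ = g := by rw [add_assoc, addself, add_zero]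
  have Hmem : ∀ u ∈ ({0, g, σ, g + σ} : Finset (Fin d → ZMod 2)),
      ∀ v ∈ ({0, g, σ, g + σ} : Finset (Fin d → ZMod 2)),
        u + v ∈ ({0, g, σ, g + σ} : Finset (Fin d → ZMod 2)) := by
    intro u hu v hv
    simp only [Finset.mem_insert, Finset.mem_singleton] at hu hv ⊢
    rcases hu with rfl | rfl | rfl | rfl <;> rcases hv with rfl | rfl | rfl | rfl
    · exact Or.inl (zero_add _)
    · exact Or.inr (Or.inl (zero_add _))
    · exact Or.inr (Or.inr (Or.inl (zero_add _)))
    · exact Or.inr (Or.inr (Or.inr (zero_add _)))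
    · exact Or.inr (Or.inl (add_zero _))
    · exact Or.inl (addself _)
    · exact Or.inr (Or.inr (Or.inr rfl))
    · exact Or.inr (Or.inr (Or.inl tB))
    · exact Or.inr (Or.inr (Or.inl (add_zero _)))
    · exact Or.inr (Or.inr (Or.inr tA))
    · exact Or.inl (addself _)
    · exact Or.inr (Or.inl tC)
    · exact Or.inr (Or.inr (Or.inr (add_zero _)))
    · exact Or.inr (Or.inr (Or.inl tD))
    · exact Or.inr (Or.inl tE)
    · exact Or.inl (addself _)
  constructor
  · intro u hu v hv
    apply master C u v (u + v)
    · rw [add_comm u v, ← add_assoc, addself, zero_add]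
    · exact HH (u + v) (Hmem u hu v hv)
  · rw [Finset.card_insert_of_notMem (by simp [hzg, hzs, hzgs]),
      Finset.card_insert_of_notMem (by simp [hgsig, hggs]),
      Finset.card_insert_of_notMem (by simp [hsgs]),
      Finset.card_singleton]
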